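/- arXiv:1701.08311 — 2 statements merged into one kernel-verified Lean document; each statement's English description precedes it below -/
import Mathlib

section
/- Let a < b be real numbers and let λ : [a,b] → ℝ be continuous with λ(t) > 0 for all t ∈ [a,b]; set Λ(t,s) = ∫_s^t λ(u) du. Then there exist points α, β, γ ∈ [a,b] such that ∫_a^b (Λ(b,t) · Λ(t,a) / Λ(b,a)) dt = (1/6) · (λ(α)λ(β)/λ(γ)) · (b − a)². In particular, ∫_a^b (Λ(b,t)Λ(t,a)/Λ(b,a)) dt ≤ (1/6) · (sup_{t∈[a,b]} 1/λ(t)) · (sup_{t∈[a,b]} λ(t))² · (b − a)². -/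
open MeasureTheory intervalIntegral

theorem stmt_10 (a b : ℝ) (hab : a < b) (lam : ℝ → ℝ)
    (hlam : ContinuousOn lam (Set.Icc a b))
    (hlampos : ∀ t ∈ Set.Icc a b, 0 < lam t) :
    (∃ α ∈ Set.Icc a b, ∃ β ∈ Set.Icc a b, ∃ γ ∈ Set.Icc a b,
      (∫ t in a..b,
          (∫ u in t..b, lam u) * (∫ u in a..t, lam u) / (∫ u in a..b, lam u)) =
        (1 / 6) * (lam α * lam β / lam γ) * (b - a) ^ 2) ∧
    (∫ t in a..b,
        (∫ u in t..b, lam u) * (∫ u in a..t, lam u) / (∫ u in a..b, lam u)) ≤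
      (1 / 6) * sSup ((fun t => (lam t)⁻¹) '' Set.Icc a b) *
        (sSup (lam '' Set.Icc a b)) ^ 2 * (b - a) ^ 2 := by
  -- min and max of lam
  obtain ⟨p, hp, hpmin⟩ := isCompact_Icc.exists_isMinOn (Set.nonempty_Icc.2 hab.le) hlam
  obtain ⟨q, hq, hqmax⟩ := isCompact_Icc.exists_isMaxOn (Set.nonempty_Icc.2 hab.le) hlam
  set m := lam p with hm
  set M := lam q with hM
  have hmpos : 0 < m := hlampos p hp
  have hMpos : 0 < M := hlampos q hq
  have hmM : m ≤ M := hpmin hq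
  -- integrability of lam on subintervals
  have hint : ∀ s ∈ Set.Icc a b, ∀ t ∈ Set.Icc a b, s ≤ t →
      IntervalIntegrable lam volume s t := by
    intro s hs t ht hst
    apply ContinuousOn.intervalIntegrable
    apply hlam.mono
    rw [Set.uIcc_of_le hst]
    exact Set.Icc_subset_Icc hs.1 ht.2
  have hintab : IntervalIntegrable lam volume a b :=
    hint a (Set.left_mem_Icc.2 hab.le) b (Set.right_mem_Icc.2 hab.le) hab.le
  set C := ∫ u in a..b, lam u with hC
  -- pointwise bounds
  have hBlow : ∀ t ∈ Set.Icc a b, m * (t - a) ≤ ∫ u in a..t, lam u := by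
    intro t ht
    have := intervalIntegral.integral_mono_on (μ := volume) ht.1
      (_root_.intervalIntegrable_const (c := m))
      (hint a (Set.left_mem_Icc.2 hab.le) t ht ht.1)
      (fun x hx => hpmin (Set.Icc_subset_Icc_right ht.2 hx))
    simpa [mul_comm] using this
  have hBhigh : ∀ t ∈ Set.Icc a b, (∫ u in a..t, lam u) ≤ M * (t - a) := by
    intro t ht
    have := intervalIntegral.integral_mono_on (μ := volume) ht.1
      (hint a (Set.left_mem_Icc.2 hab.le) t ht ht.1)
      (_root_.intervalIntegrable_const (c := M))
      (fun x hx => hqmax (Set.Icc_subset_Icc_right ht.2 hx))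
    simpa [mul_comm] using this
  have hAeq : ∀ t ∈ Set.Icc a b, (∫ u in t..b, lam u) = C - ∫ u in a..t, lam u := by
    intro t ht
    have := intervalIntegral.integral_add_adjacent_intervals
      (hint a (Set.left_mem_Icc.2 hab.le) t ht ht.1)
      (hint t ht b (Set.right_mem_Icc.2 hab.le) ht.2)
    rw [← hC] at this
    linarith
  have hAlow : ∀ t ∈ Set.Icc a b, m * (b - t) ≤ C - ∫ u in a..t, lam u := by
    intro t ht
    rw [← hAeq t ht]
    have := intervalIntegral.integral_mono_on (μ := volume) ht.2
      (_root_.intervalIntegrable_const (c := m))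
      (hint t ht b (Set.right_mem_Icc.2 hab.le) ht.2)
      (fun x hx => hpmin (Set.Icc_subset_Icc_left ht.1 hx))
    simpa [mul_comm] using this
  have hAhigh : ∀ t ∈ Set.Icc a b, (C - ∫ u in a..t, lam u) ≤ M * (b - t) := by
    intro t ht
    rw [← hAeq t ht]
    have := intervalIntegral.integral_mono_on (μ := volume) ht.2
      (hint t ht b (Set.right_mem_Icc.2 hab.le) ht.2)
      (_root_.intervalIntegrable_const (c := M))
      (fun x hx => hqmax (Set.Icc_subset_Icc_left ht.1 hx))
    simpa [mul_comm] using this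
  have hClow : m * (b - a) ≤ C := by
    rw [hC]; exact hBlow b (Set.right_mem_Icc.2 hab.le)
  have hChigh : C ≤ M * (b - a) := by
    rw [hC]; exact hBhigh b (Set.right_mem_Icc.2 hab.le)
  have hCpos : 0 < C := lt_of_lt_of_le (by nlinarith) hClow
  -- continuity of the integrand
  have hBcont : ContinuousOn (fun t => ∫ u in a..t, lam u) (Set.Icc a b) := by
    have := continuousOn_primitive_interval (f := lam) (a := a) (b := b) (μ := volume)
      (by
        rw [Set.uIcc_of_le hab.le]
        exact (hlam.mono subset_rfl).integrableOn_compact isCompact_Icc)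
    rwa [Set.uIcc_of_le hab.le] at this
  have hfcont : ContinuousOn
      (fun t => (∫ u in t..b, lam u) * (∫ u in a..t, lam u) / C) (Set.Icc a b) := by
    have h1 : ContinuousOn (fun t => (C - ∫ u in a..t, lam u) * (∫ u in a..t, lam u) / C)
        (Set.Icc a b) :=
      ((continuousOn_const.sub hBcont).mul hBcont).div_const C
    exact h1.congr fun t ht => by rw [hAeq t ht]
  have hfint : IntervalIntegrable
      (fun t => (∫ u in t..b, lam u) * (∫ u in a..t, lam u) / C) volume a b := by
    apply hfcont.intervalIntegrable_of_Icc hab.le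
  -- polynomial integral
  have hpoly : (∫ t in a..b, (b - t) * (t - a)) = (b - a) ^ 3 / 6 := by
    have heq : (fun t : ℝ => (b - t) * (t - a)) =
        fun t => (a + b) * t - (t ^ 2 + a * b) := by funext t; ring
    rw [heq, intervalIntegral.integral_sub, intervalIntegral.integral_const_mul,
      intervalIntegral.integral_add, integral_pow, integral_id, intervalIntegral.integral_const]
    · simp only [smul_eq_mul]; ring
    · exact (continuous_pow 2).intervalIntegrable a b
    · exact intervalIntegrable_const
    · exact (continuous_const.mul continuous_id).intervalIntegrable a b
    · exact ((continuous_pow 2).add continuous_const).intervalIntegrable a b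
  set I := ∫ t in a..b, (∫ u in t..b, lam u) * (∫ u in a..t, lam u) / C with hI
  -- bounds on I
  have hIlow : m ^ 2 / (M * (b - a)) * ((b - a) ^ 3 / 6) ≤ I := by
    rw [← hpoly, ← intervalIntegral.integral_const_mul]
    apply intervalIntegral.integral_mono_on hab.le
      (((continuous_const.mul ((continuous_const.sub continuous_id).mul
        (continuous_id.sub continuous_const)))).intervalIntegrable a b) hfint
    intro t ht
    have h1 := hAlow t ht
    have h2 := hBlow t ht
    have hbt : 0 ≤ b - t := by linarith [ht.2]
    have hta : 0 ≤ t - a := by linarith [ht.1]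
    have hmbt : (0:ℝ) ≤ m * (b - t) := mul_nonneg hmpos.le hbt
    have hmta : (0:ℝ) ≤ m * (t - a) := mul_nonneg hmpos.le hta
    have hnum : m ^ 2 * ((b - t) * (t - a)) ≤ (∫ u in t..b, lam u) * (∫ u in a..t, lam u) := by
      rw [hAeq t ht]
      have := mul_le_mul h1 h2 hmta (hmbt.trans h1)
      nlinarith [this]
    have hABnn : (0:ℝ) ≤ (∫ u in t..b, lam u) * (∫ u in a..t, lam u) := by
      rw [hAeq t ht]
      exact mul_nonneg (hmbt.trans h1) (hmta.trans h2)
    calc m ^ 2 / (M * (b - a)) * ((b - t) * (t - a))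
        = m ^ 2 * ((b - t) * (t - a)) / (M * (b - a)) := by ring
      _ ≤ (∫ u in t..b, lam u) * (∫ u in a..t, lam u) / C := by
          apply div_le_div₀ hABnn hnum hCpos hChigh
  have hIhigh : I ≤ M ^ 2 / (m * (b - a)) * ((b - a) ^ 3 / 6) := by
    rw [← hpoly, ← intervalIntegral.integral_const_mul]
    apply intervalIntegral.integral_mono_on hab.le hfint
      (((continuous_const.mul ((continuous_const.sub continuous_id).mul
        (continuous_id.sub continuous_const)))).intervalIntegrable a b)
    intro t ht
    have h1 := hAhigh t ht
    have h2 := hBhigh t ht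
    have hbt : 0 ≤ b - t := by linarith [ht.2]
    have hta : 0 ≤ t - a := by linarith [ht.1]
    have h1' := hAlow t ht
    have h2' := hBlow t ht
    have hmbt : (0:ℝ) ≤ m * (b - t) := mul_nonneg hmpos.le hbt
    have hmta : (0:ℝ) ≤ m * (t - a) := mul_nonneg hmpos.le hta
    have hnum : (∫ u in t..b, lam u) * (∫ u in a..t, lam u) ≤ M ^ 2 * ((b - t) * (t - a)) := by
      rw [hAeq t ht]
      have := mul_le_mul h1 h2 (hmta.trans h2') (mul_nonneg hMpos.le hbt)
      nlinarith [this]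
    calc (∫ u in t..b, lam u) * (∫ u in a..t, lam u) / C
        ≤ M ^ 2 * ((b - t) * (t - a)) / (m * (b - a)) := by
          apply div_le_div₀ (mul_nonneg (mul_nonneg (sq_nonneg M) hbt) hta |>.trans_eq
            (by ring)) hnum (mul_pos hmpos (by linarith)) hClow
      _ = M ^ 2 / (m * (b - a)) * ((b - t) * (t - a)) := by ring
  -- the value r
  set r := 6 * I / (b - a) ^ 2 with hr
  have hba2 : (0:ℝ) < (b - a) ^ 2 := pow_pos (sub_pos.2 hab) 2
  have hrlow : m ^ 2 / M ≤ r := by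
    rw [hr, le_div_iff₀ hba2]
    have : m ^ 2 / (M * (b - a)) * ((b - a) ^ 3 / 6) = m ^ 2 / M * (b - a) ^ 2 / 6 := by
      field_simp [hMpos.ne', (sub_pos.2 hab).ne']
    rw [this] at hIlow
    linarith
  have hrhigh : r ≤ M ^ 2 / m := by
    rw [hr, div_le_iff₀ hba2]
    have : M ^ 2 / (m * (b - a)) * ((b - a) ^ 3 / 6) = M ^ 2 / m * (b - a) ^ 2 / 6 := by
      field_simp [hmpos.ne', (sub_pos.2 hab).ne']
    rw [this] at hIhigh
    linarith
  -- intermediate value for G(x,y) = lam x ^ 2 / lam y on Icc × Icc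
  have hprecon : IsPreconnected (Set.Icc a b ×ˢ Set.Icc a b) :=
    ((convex_Icc a b).prod (convex_Icc a b)).isPreconnected
  have hGcont : ContinuousOn (fun z : ℝ × ℝ => lam z.1 * lam z.1 / lam z.2)
      (Set.Icc a b ×ˢ Set.Icc a b) := by
    have h1 : ContinuousOn (fun z : ℝ × ℝ => lam z.1) (Set.Icc a b ×ˢ Set.Icc a b) :=
      hlam.comp continuousOn_fst fun z hz => hz.1
    have h2 : ContinuousOn (fun z : ℝ × ℝ => lam z.2) (Set.Icc a b ×ˢ Set.Icc a b) :=
      hlam.comp continuousOn_snd fun z hz => hz.2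
    exact (h1.mul h1).div h2 fun z hz => (hlampos z.2 hz.2).ne'
  have hmem1 : ((p, q) : ℝ × ℝ) ∈ Set.Icc a b ×ˢ Set.Icc a b := ⟨hp, hq⟩
  have hmem2 : ((q, p) : ℝ × ℝ) ∈ Set.Icc a b ×ˢ Set.Icc a b := ⟨hq, hp⟩
  have hiv := hprecon.intermediate_value hmem1 hmem2 hGcont
  have hrmem : r ∈ Set.Icc (lam (p, q).1 * lam (p, q).1 / lam (p, q).2)
      (lam (q, p).1 * lam (q, p).1 / lam (q, p).2) := by
    simp only
    constructor
    · calc lam p * lam p / lam q = m ^ 2 / M := by rw [← hm, ← hM]; ring_nf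
        _ ≤ r := hrlow
    · calc r ≤ M ^ 2 / m := hrhigh
        _ = lam q * lam q / lam p := by rw [← hm, ← hM]; ring_nf
  obtain ⟨z, hz, hzval⟩ := hiv hrmem
  have hzval' : lam z.1 * lam z.1 / lam z.2 = r := hzval
  have hIr : I = (1 / 6) * (lam z.1 * lam z.1 / lam z.2) * (b - a) ^ 2 := by
    rw [hzval', hr]
    field_simp
    rw [mul_div_assoc, div_self (sub_pos.2 hab).ne', mul_one]
  constructor
  · exact ⟨z.1, hz.1, z.1, hz.1, z.2, hz.2, hIr⟩
  · -- second part
    rw [hIr]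
    set S := sSup (lam '' Set.Icc a b) with hS
    set T := sSup ((fun t => (lam t)⁻¹) '' Set.Icc a b) with hT
    have hbdd : BddAbove (lam '' Set.Icc a b) :=
      (isCompact_Icc.image_of_continuousOn hlam).bddAbove
    have hbdd' : BddAbove ((fun t => (lam t)⁻¹) '' Set.Icc a b) := by
      apply IsCompact.bddAbove
      apply isCompact_Icc.image_of_continuousOn
      exact hlam.inv₀ fun t ht => (hlampos t ht).ne'
    have h1 : lam z.1 ≤ S := le_csSup hbdd ⟨z.1, hz.1, rfl⟩
    have h2 : (lam z.2)⁻¹ ≤ T := le_csSup hbdd' ⟨z.2, hz.2, rfl⟩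
    have hz1pos : 0 < lam z.1 := hlampos z.1 hz.1
    have hz2pos : 0 < lam z.2 := hlampos z.2 hz.2
    have hSpos : 0 < S := hz1pos.trans_le h1
    have key : lam z.1 * lam z.1 / lam z.2 ≤ T * S ^ 2 := by
      rw [div_eq_mul_inv]
      calc lam z.1 * lam z.1 * (lam z.2)⁻¹ ≤ S * S * T := by
            apply mul_le_mul (mul_le_mul h1 h1 hz1pos.le (hz1pos.le.trans h1))
              h2 (inv_nonneg.2 hz2pos.le) (by positivity)
        _ = T * S ^ 2 := by ring
    calc (1 / 6 : ℝ) * (lam z.1 * lam z.1 / lam z.2) * (b - a) ^ 2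
        ≤ (1 / 6) * (T * S ^ 2) * (b - a) ^ 2 := by
          apply mul_le_mul_of_nonneg_right
            (mul_le_mul_of_nonneg_left key (by norm_num)) hba2.le
      _ = (1 / 6) * T * S ^ 2 * (b - a) ^ 2 := by ring
end

section
/- Let a < b be real numbers and let λ : [a,b] → ℝ be continuous with m := inf_{t∈[a,b]} λ(t) > 0; set Λ(t,s) = ∫_s^t λ(u) du and ω := sup_{u,v∈[a,b]} |λ(u) − λ(v)|. Then for every t ∈ [a,b], |Λ(t,a)/Λ(b,a) − (t − a)/(b − a)| ≤ ω/m. -/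
open MeasureTheory intervalIntegral

theorem stmt_11 (a b : ℝ) (hab : a < b) (lam : ℝ → ℝ)
    (hlam : ContinuousOn lam (Set.Icc a b))
    (hm : 0 < sInf (lam '' Set.Icc a b)) :
    ∀ t ∈ Set.Icc a b,
      |(∫ u in a..t, lam u) / (∫ u in a..b, lam u) - (t - a) / (b - a)| ≤
        sSup ((fun p : ℝ × ℝ => |lam p.1 - lam p.2|) '' Set.Icc a b ×ˢ Set.Icc a b) /
          sInf (lam '' Set.Icc a b) := by
  intro t ht
  obtain ⟨hat, htb⟩ := ht
  set m := sInf (lam '' Set.Icc a b) with hmdef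
  set M := sSup (lam '' Set.Icc a b) with hMdef
  set ω := sSup ((fun p : ℝ × ℝ => |lam p.1 - lam p.2|) '' Set.Icc a b ×ˢ Set.Icc a b) with hωdef
  have hK : IsCompact (Set.Icc a b) := isCompact_Icc
  have hKne : (Set.Icc a b).Nonempty := ⟨a, le_refl a, hab.le⟩
  have himg : IsCompact (lam '' Set.Icc a b) := hK.image_of_continuousOn hlam
  have himgne : (lam '' Set.Icc a b).Nonempty := hKne.image lam
  have hbdd : BddAbove (lam '' Set.Icc a b) := himg.bddAbove
  have hbddb : BddBelow (lam '' Set.Icc a b) := himg.bddBelow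
  have hlow : ∀ u ∈ Set.Icc a b, m ≤ lam u := fun u hu =>
    csInf_le hbddb (Set.mem_image_of_mem lam hu)
  have hhigh : ∀ u ∈ Set.Icc a b, lam u ≤ M := fun u hu =>
    le_csSup hbdd (Set.mem_image_of_mem lam hu)
  have hmM : m ≤ M := by
    obtain ⟨u, hu⟩ := hKne
    exact le_trans (hlow u hu) (hhigh u hu)
  -- ω ≥ M - m
  have hprodK : IsCompact (Set.Icc a b ×ˢ Set.Icc a b) := hK.prod hK
  have hgcont : ContinuousOn (fun p : ℝ × ℝ => |lam p.1 - lam p.2|)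
      (Set.Icc a b ×ˢ Set.Icc a b) := by
    apply ContinuousOn.abs
    exact (hlam.comp continuousOn_fst fun p hp => hp.1).sub
      (hlam.comp continuousOn_snd fun p hp => hp.2)
  have hgimg : IsCompact ((fun p : ℝ × ℝ => |lam p.1 - lam p.2|) ''
      (Set.Icc a b ×ˢ Set.Icc a b)) := hprodK.image_of_continuousOn hgcont
  have hMmem : M ∈ lam '' Set.Icc a b := himg.sSup_mem himgne
  have hmmem : m ∈ lam '' Set.Icc a b := himg.sInf_mem himgne
  obtain ⟨u, hu, huM⟩ := hMmem
  obtain ⟨v, hv, hvm⟩ := hmmem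
  have hωMm : M - m ≤ ω := by
    have : |lam u - lam v| ∈ (fun p : ℝ × ℝ => |lam p.1 - lam p.2|) ''
        (Set.Icc a b ×ˢ Set.Icc a b) := ⟨(u, v), ⟨hu, hv⟩, rfl⟩
    have h2 := le_csSup hgimg.bddAbove this
    rw [huM, hvm, abs_of_nonneg (by linarith)] at h2
    exact h2
  -- integrability
  have hint : ∀ s ∈ Set.Icc a b, IntervalIntegrable lam volume a s := by
    intro s hs
    apply ContinuousOn.intervalIntegrable
    apply hlam.mono
    rw [Set.uIcc_of_le hs.1]
    exact Set.Icc_subset_Icc le_rfl hs.2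
  have hintc : ∀ (c s : ℝ), IntervalIntegrable (fun _ => c) volume a s := fun c s =>
    intervalIntegrable_const
  set I := ∫ u in a..t, lam u with hIdef
  set J := ∫ u in a..b, lam u with hJdef
  have hIub : I ≤ M * (t - a) := by
    have := intervalIntegral.integral_mono_on hat (hint t ⟨hat, htb⟩) (hintc M t)
      (fun x hx => hhigh x ⟨hx.1, le_trans hx.2 htb⟩)
    simpa [intervalIntegral.integral_const, mul_comm] using this
  have hIlb : m * (t - a) ≤ I := by
    have := intervalIntegral.integral_mono_on hat (hintc m t) (hint t ⟨hat, htb⟩)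
      (fun x hx => hlow x ⟨hx.1, le_trans hx.2 htb⟩)
    simpa [intervalIntegral.integral_const, mul_comm] using this
  have hJub : J ≤ M * (b - a) := by
    have := intervalIntegral.integral_mono_on hab.le (hint b ⟨hab.le, le_rfl⟩) (hintc M b)
      (fun x hx => hhigh x hx)
    simpa [intervalIntegral.integral_const, mul_comm] using this
  have hJlb : m * (b - a) ≤ J := by
    have := intervalIntegral.integral_mono_on hab.le (hintc m b) (hint b ⟨hab.le, le_rfl⟩)
      (fun x hx => hlow x hx)
    simpa [intervalIntegral.integral_const, mul_comm] using this
  have hba : (0:ℝ) < b - a := by linarith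
  have hJpos : 0 < J := lt_of_lt_of_le (by positivity) hJlb
  have hta : (0:ℝ) ≤ t - a := by linarith
  have htb' : t - a ≤ b - a := by linarith
  have key : |I / J - (t - a) / (b - a)| ≤ (M - m) / m := by
    have h1 : I * (b - a) * m ≤ M * (t - a) * (b - a) * m :=
      mul_le_mul_of_nonneg_right (mul_le_mul_of_nonneg_right hIub hba.le) hm.le
    have h2 : m * (b - a) * (t - a) * m ≤ J * (t - a) * m :=
      mul_le_mul_of_nonneg_right (mul_le_mul_of_nonneg_right hJlb hta) hm.le
    have h1' : m * (t - a) * (b - a) * m ≤ I * (b - a) * m :=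
      mul_le_mul_of_nonneg_right (mul_le_mul_of_nonneg_right hIlb hba.le) hm.le
    have h2' : J * (t - a) * m ≤ M * (b - a) * (t - a) * m :=
      mul_le_mul_of_nonneg_right (mul_le_mul_of_nonneg_right hJub hta) hm.le
    have h3 : (M - m) * (m * (b - a)) * (b - a) ≤ (M - m) * J * (b - a) :=
      mul_le_mul_of_nonneg_right
        (by nlinarith [mul_le_mul_of_nonneg_left hJlb (sub_nonneg.2 hmM)]) hba.le
    have h4 : 0 ≤ (M - m) * m * ((b - a - (t - a)) * (b - a)) :=
      mul_nonneg (mul_nonneg (sub_nonneg.2 hmM) hm.le)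
        (mul_nonneg (by linarith) hba.le)
    rw [abs_le]
    constructor
    · rw [div_sub_div _ _ (ne_of_gt hJpos) (ne_of_gt hba), neg_le, ← neg_div,
        div_le_div_iff₀ (mul_pos hJpos hba) hm]
      nlinarith [h1', h2', h3, h4]
    · rw [div_sub_div _ _ (ne_of_gt hJpos) (ne_of_gt hba),
        div_le_div_iff₀ (mul_pos hJpos hba) hm]
      nlinarith [h1, h2, h3, h4]
  refine key.trans ?_
  gcongr
end
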